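/- arXiv:2603.26035 — 3 statements merged into one kernel-verified Lean document; each statement's English description precedes it below -/
import Mathlib

section
/- Let W be the ring of Witt vectors of a perfect field k of characteristic p, let 𝔖 = W[[u]], and let φ : 𝔖 → 𝔖 be the ring endomorphism acting as the Witt vector Frobenius on W and sending u to u^p. If I ⊆ 𝔖 is an ideal satisfying 𝔖·φ(I) ⊇ I, then I = (p^n) for some n ∈ ℕ ∪ {∞} (where (p^∞) means the zero ideal). -/
open PowerSeries

section Aux

variable (p : ℕ) [Fact p.Prime] (k : Type) [Field k] [CharP k p] [PerfectRing k p]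

/-- The residue map `W(k) → k`, given by the zeroth ghost component (= zeroth coefficient). -/
noncomputable def resW : WittVector p k →+* k := WittVector.ghostComponent 0

lemma resW_apply (x : WittVector p k) : resW p k x = x.coeff 0 := by
  rw [resW, WittVector.ghostComponent_apply, wittPolynomial_zero, MvPolynomial.aeval_X]

lemma resW_frobenius (x : WittVector p k) :
    resW p k (WittVector.frobenius x) = resW p k x ^ p := by
  simp [resW_apply, WittVector.coeff_frobenius_charP]

lemma pdvd_of_coeffZero_eq_zero (x : WittVector p k) (h : x.coeff 0 = 0) :
    (p : WittVector p k) ∣ x := by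
  have h1 : x = WittVector.verschiebung (x.shift 1) := by
    have h2 := WittVector.eq_iterate_verschiebung (x := x) (n := 1) ?_
    · simpa using h2
    · intro i hi
      interval_cases i
      exact h
  obtain ⟨w, hw⟩ := (WittVector.frobenius_bijective p k).surjective (x.shift 1)
  refine ⟨w, ?_⟩
  rw [h1, ← hw, WittVector.verschiebung_frobenius, mul_comm]

lemma not_pow_dvd (x : WittVector p k) (hx : x ≠ 0) :
    ∃ N : ℕ, ¬ (p : WittVector p k) ^ N ∣ x := by
  obtain ⟨m, b, hb0, rfl⟩ := WittVector.exists_eq_pow_p_mul x hx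
  refine ⟨m + 1, ?_⟩
  rintro ⟨c, hc⟩
  apply hb0
  have hp0 : (p : WittVector p k) ^ m ≠ 0 := pow_ne_zero _ (WittVector.p_nonzero p k)
  have hb : b = (p : WittVector p k) * c := by
    apply mul_left_cancel₀ hp0
    rw [pow_succ] at hc
    rw [hc]; ring
  rw [hb, mul_comm]
  exact WittVector.mul_charP_coeff_zero c

lemma coeff_pow_p_dvd (n : ℕ) (f : PowerSeries (WittVector p k))
    (h : (p : PowerSeries (WittVector p k)) ^ n ∣ f) (i : ℕ) :
    (p : WittVector p k) ^ n ∣ (PowerSeries.coeff i) f := by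
  obtain ⟨c, rfl⟩ := h
  refine ⟨(PowerSeries.coeff i) c, ?_⟩
  rw [← map_natCast (C (R := WittVector p k)) p, ← map_pow, PowerSeries.coeff_C_mul]

lemma pdvd_of_pi_eq_zero (f : PowerSeries (WittVector p k))
    (h : PowerSeries.map (resW p k) f = 0) :
    (p : PowerSeries (WittVector p k)) ∣ f := by
  have hc : ∀ i, ∃ c, (PowerSeries.coeff i) f = (p : WittVector p k) * c := by
    intro i
    apply pdvd_of_coeffZero_eq_zero
    have h2 := congrArg (PowerSeries.coeff i) h
    rw [PowerSeries.coeff_map, map_zero, resW_apply] at h2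
    exact h2
  choose c hcspec using hc
  refine ⟨PowerSeries.mk c, ?_⟩
  have hpC : (p : PowerSeries (WittVector p k)) = C ((p : WittVector p k)) :=
    (map_natCast (C (R := WittVector p k)) p).symm
  rw [hpC]
  refine PowerSeries.ext fun i => ?_
  rw [PowerSeries.coeff_C_mul, PowerSeries.coeff_mk]
  exact hcspec i

lemma pi_phi (φ : PowerSeries (WittVector p k) →+* PowerSeries (WittVector p k))
    (hφC : ∀ a : WittVector p k, φ (C a) = C (WittVector.frobenius a))
    (hφX : φ (X : PowerSeries (WittVector p k)) = X ^ p)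
    (g : PowerSeries (WittVector p k)) :
    PowerSeries.map (resW p k) (φ g) = (PowerSeries.map (resW p k) g) ^ p := by
  haveI : CharP (PowerSeries k) p := charP_of_injective_ringHom PowerSeries.C_injective p
  have hp1 : 1 ≤ p := (Fact.out : p.Prime).one_lt.le
  have key : ∀ N : ℕ, (X : PowerSeries k) ^ (p * N) ∣
      PowerSeries.map (resW p k) (φ g) - (PowerSeries.map (resW p k) g) ^ p := by
    intro N
    set s : PowerSeries (WittVector p k) :=
      ∑ i ∈ Finset.range N, C ((PowerSeries.coeff i) g) * X ^ i with hs
    have hdvd : (X : PowerSeries (WittVector p k)) ^ N ∣ g - s := by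
      rw [PowerSeries.X_pow_dvd_iff]
      intro d hd
      have hcs : (PowerSeries.coeff d) s = (PowerSeries.coeff d) g := by
        rw [hs, map_sum]
        simp only [PowerSeries.coeff_C_mul_X_pow]
        rw [Finset.sum_ite_eq]
        simp [Finset.mem_range.mpr hd]
      rw [map_sub, hcs, sub_self]
    obtain ⟨h, hh⟩ := hdvd
    have hg : g = s + X ^ N * h := by rw [← hh]; ring
    have hφg : φ g = φ s + X ^ (p * N) * φ h := by
      rw [hg, map_add, map_mul, map_pow, hφX, ← pow_mul]
    have hπs : PowerSeries.map (resW p k) s =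
        ∑ i ∈ Finset.range N, C (resW p k ((PowerSeries.coeff i) g)) * X ^ i := by
      rw [hs, map_sum]
      refine Finset.sum_congr rfl fun i _ => ?_
      rw [map_mul, PowerSeries.map_C, map_pow, PowerSeries.map_X]
    have hs2 : PowerSeries.map (resW p k) (φ s) = (PowerSeries.map (resW p k) s) ^ p := by
      rw [hπs, sum_pow_char, hs, map_sum, map_sum]
      refine Finset.sum_congr rfl fun i _ => ?_
      have hterm : φ (C ((PowerSeries.coeff i) g) * X ^ i)
          = C (WittVector.frobenius ((PowerSeries.coeff i) g)) * X ^ (p * i) := by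
        rw [map_mul, hφC, map_pow, hφX, ← pow_mul]
      rw [hterm, map_mul, PowerSeries.map_C, map_pow, PowerSeries.map_X, resW_frobenius,
        mul_pow, map_pow, mul_comm p i, pow_mul]
    have hd1 : (X : PowerSeries k) ^ (p * N) ∣
        PowerSeries.map (resW p k) (φ g) - PowerSeries.map (resW p k) (φ s) := by
      refine ⟨PowerSeries.map (resW p k) (φ h), ?_⟩
      rw [hφg, map_add, map_mul, map_pow, PowerSeries.map_X]
      ring
    have hd2 : (X : PowerSeries k) ^ (p * N) ∣
        (PowerSeries.map (resW p k) g) ^ p - (PowerSeries.map (resW p k) s) ^ p := by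
      have hπg : PowerSeries.map (resW p k) g = PowerSeries.map (resW p k) s
          + X ^ N * PowerSeries.map (resW p k) h := by
        rw [hg, map_add, map_mul, map_pow, PowerSeries.map_X]
      refine ⟨(PowerSeries.map (resW p k) h) ^ p, ?_⟩
      rw [hπg, add_pow_char, mul_pow, ← pow_mul, mul_comm N p]
      ring
    have := dvd_sub hd1 hd2
    rw [show PowerSeries.map (resW p k) (φ g) - PowerSeries.map (resW p k) (φ s)
        - ((PowerSeries.map (resW p k) g) ^ p - (PowerSeries.map (resW p k) s) ^ p)
        = PowerSeries.map (resW p k) (φ g) - (PowerSeries.map (resW p k) g) ^ p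
        - (PowerSeries.map (resW p k) (φ s) - (PowerSeries.map (resW p k) s) ^ p) by ring,
      hs2, sub_self, sub_zero] at this
    exact this
  by_contra hne
  have hne' : PowerSeries.map (resW p k) (φ g) - (PowerSeries.map (resW p k) g) ^ p ≠ 0 :=
    sub_ne_zero.mpr hne
  obtain ⟨d, hd⟩ : ∃ d, (PowerSeries.coeff d)
      (PowerSeries.map (resW p k) (φ g) - (PowerSeries.map (resW p k) g) ^ p) ≠ 0 := by
    by_contra hall
    push_neg at hall
    exact hne' (PowerSeries.ext hall)
  have hkey := key (d + 1)
  rw [PowerSeries.X_pow_dvd_iff] at hkey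
  have hlt : d < p * (d + 1) := by
    have : d + 1 ≤ p * (d + 1) := Nat.le_mul_of_pos_left _ (by omega)
    omega
  exact hd (hkey d hlt)

end Aux

set_option maxHeartbeats 1000000 in
/-- A largest element of a bounded nonempty downward-closed-ish family. -/
theorem nat_max_aux (P : ℕ → Prop) (h0 : P 0) (N : ℕ) (hb : ∀ n, P n → n < N) :
    ∃ n, P n ∧ ¬ P (n + 1) := by
  classical
  refine ⟨Nat.findGreatest P N, Nat.findGreatest_spec (Nat.zero_le N) h0, fun h => ?_⟩
  have h2 := Nat.le_findGreatest (hb _ h).le h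
  omega

theorem nat_min_aux (P : ℕ → Prop) (h : ∃ d, P d) :
    ∃ m, P m ∧ ∀ d < m, ¬ P d := by
  classical
  exact ⟨Nat.find h, Nat.find_spec h, fun d hd => Nat.find_min h hd⟩

set_option maxHeartbeats 1000000 in
/-- Key Lemma. -/
theorem stmt0 (p : ℕ) [Fact p.Prime] (k : Type) [Field k] [CharP k p] [PerfectRing k p]
    (φ : PowerSeries (WittVector p k) →+* PowerSeries (WittVector p k))
    (hφC : ∀ a : WittVector p k, φ (C a) = C (WittVector.frobenius a))
    (hφX : φ (X : PowerSeries (WittVector p k)) = X ^ p)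
    (I : Ideal (PowerSeries (WittVector p k)))
    (hI : I ≤ Ideal.span (φ '' (I : Set (PowerSeries (WittVector p k))))) :
    (∃ n : ℕ, I = Ideal.span {(p : PowerSeries (WittVector p k)) ^ n}) ∨ I = ⊥ := by
  classical
  rcases eq_or_ne I ⊥ with hbot | hbot
  · right; exact hbot
  left
  have hp1 : 1 < p := (Fact.out : p.Prime).one_lt
  have hpA : (p : PowerSeries (WittVector p k)) ≠ 0 := by
    intro h
    apply WittVector.p_nonzero p k
    have h2 := congrArg (PowerSeries.constantCoeff (R := WittVector p k)) h
    rwa [map_natCast, map_zero] at h2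
  obtain ⟨f0, hf0I, hf0⟩ := Submodule.exists_mem_ne_zero_of_ne_bot hbot
  obtain ⟨m0, hm0⟩ : ∃ m0, (PowerSeries.coeff m0) f0 ≠ 0 := by
    by_contra hall
    push_neg at hall
    exact hf0 (PowerSeries.ext hall)
  obtain ⟨N, hN⟩ := not_pow_dvd p k _ hm0
  have hPbound : ∀ n, I ≤ Ideal.span {(p : PowerSeries (WittVector p k)) ^ n} → n < N := by
    intro n hn
    by_contra hge
    push_neg at hge
    apply hN
    have hdvd : (p : PowerSeries (WittVector p k)) ^ n ∣ f0 :=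
      Ideal.mem_span_singleton.mp (hn hf0I)
    exact dvd_trans (pow_dvd_pow _ hge) (coeff_pow_p_dvd p k n f0 hdvd m0)
  have hP0 : I ≤ Ideal.span {(p : PowerSeries (WittVector p k)) ^ 0} := by
    intro x _
    rw [pow_zero]
    exact Ideal.mem_span_singleton.mpr (one_dvd _)
  obtain ⟨n, hPn, hPn1⟩ := nat_max_aux _ hP0 N hPbound
  -- the ideal J = (I : p^n), taken abstractly
  obtain ⟨J, hJmem⟩ : ∃ J : Ideal (PowerSeries (WittVector p k)),
      ∀ x, x ∈ J ↔ (p : PowerSeries (WittVector p k)) ^ n * x ∈ I :=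
    ⟨I.colon (Ideal.span {(p : PowerSeries (WittVector p k)) ^ n}),
      fun x => by rw [Ideal.mem_colon_span_singleton, mul_comm]⟩
  have hJle : J ≤ Ideal.span (φ '' (J : Set (PowerSeries (WittVector p k)))) := by
    intro x hx
    have h1 : (p : PowerSeries (WittVector p k)) ^ n * x ∈ Ideal.span (φ '' I) :=
      hI ((hJmem x).mp hx)
    have claim : ∀ z ∈ Ideal.span (φ '' (I : Set (PowerSeries (WittVector p k)))),
        ∃ w ∈ Ideal.span (φ '' (J : Set (PowerSeries (WittVector p k)))),
          z = (p : PowerSeries (WittVector p k)) ^ n * w := by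
      intro z hz
      induction hz using Submodule.span_induction with
      | mem z hzmem =>
        obtain ⟨f, hfI, rfl⟩ := hzmem
        obtain ⟨y, hy⟩ := Ideal.mem_span_singleton.mp (hPn hfI)
        have hyJ : y ∈ J := by
          rw [hJmem, ← hy]; exact hfI
        refine ⟨φ y, Ideal.subset_span ⟨y, hyJ, rfl⟩, ?_⟩
        rw [hy, map_mul, map_pow, map_natCast]
      | zero => exact ⟨0, Submodule.zero_mem _, by ring⟩
      | add a b ha hb iha ihb =>
        obtain ⟨w1, hw1, rfl⟩ := iha
        obtain ⟨w2, hw2, rfl⟩ := ihb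
        exact ⟨w1 + w2, Submodule.add_mem _ hw1 hw2, by ring⟩
      | smul c z hz ihz =>
        obtain ⟨w, hw, rfl⟩ := ihz
        refine ⟨c * w, Ideal.mul_mem_left _ _ hw, ?_⟩
        simp only [smul_eq_mul]
        ring
    obtain ⟨w, hw, hww⟩ := claim _ h1
    have hxw : x = w := mul_left_cancel₀ (pow_ne_zero _ hpA) hww
    rwa [hxw]
  -- an element of J not divisible by p
  obtain ⟨g0, hg0I, hg0⟩ : ∃ g ∈ I, ¬ (p : PowerSeries (WittVector p k)) ^ (n + 1) ∣ g := by
    by_contra hall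
    push_neg at hall
    exact hPn1 fun f hf => Ideal.mem_span_singleton.mpr (hall f hf)
  obtain ⟨x0, hx0⟩ := Ideal.mem_span_singleton.mp (hPn hg0I)
  have hx0J : x0 ∈ J := by rw [hJmem, ← hx0]; exact hg0I
  have hx0p : ¬ (p : PowerSeries (WittVector p k)) ∣ x0 := by
    rintro ⟨c, hc⟩
    exact hg0 ⟨c, by rw [hx0, hc, pow_succ]; ring⟩
  have hπx0 : PowerSeries.map (resW p k) x0 ≠ 0 := fun h => hx0p (pdvd_of_pi_eq_zero p k _ h)
  -- the minimal order m over J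
  have hTex : ∃ d, ∃ x, x ∈ J ∧
      (PowerSeries.coeff d) (PowerSeries.map (resW p k) x) ≠ 0 := by
    obtain ⟨d, hd⟩ : ∃ d, (PowerSeries.coeff d) (PowerSeries.map (resW p k) x0) ≠ 0 := by
      by_contra hall
      push_neg at hall
      exact hπx0 (PowerSeries.ext hall)
    exact ⟨d, x0, hx0J, hd⟩
  obtain ⟨m, ⟨x, hxJ, hxm⟩, hminP⟩ := nat_min_aux _ hTex
  have hmin : ∀ d < m, ∀ y ∈ J, (PowerSeries.coeff d) (PowerSeries.map (resW p k) y) = 0 := by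
    intro d hd y hy
    by_contra hne
    exact hminP d hd ⟨y, hy, hne⟩
  have hXm : ∀ y ∈ J, (X : PowerSeries k) ^ m ∣ PowerSeries.map (resW p k) y := by
    intro y hy
    rw [PowerSeries.X_pow_dvd_iff]
    exact fun d hd => hmin d hd y hy
  have hspan : ∀ z ∈ Ideal.span (φ '' (J : Set (PowerSeries (WittVector p k)))),
      (X : PowerSeries k) ^ (p * m) ∣ PowerSeries.map (resW p k) z := by
    intro z hz
    induction hz using Submodule.span_induction with
    | mem z hzmem =>
      obtain ⟨y, hyJ, rfl⟩ := hzmem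
      rw [pi_phi p k φ hφC hφX]
      obtain ⟨c, hc⟩ := hXm y hyJ
      exact ⟨c ^ p, by rw [hc, mul_pow, ← pow_mul, mul_comm m p]⟩
    | zero => simp
    | add a b ha hb iha ihb => rw [map_add]; exact dvd_add iha ihb
    | smul c z hz ihz =>
      rw [smul_eq_mul, map_mul]
      exact Dvd.dvd.mul_left ihz _
  have hm0 : m = 0 := by
    by_contra hmne
    have hmpos : 0 < m := Nat.pos_of_ne_zero hmne
    have h1 : m < p * m := by
      have h3 := (Nat.mul_lt_mul_right hmpos).mpr hp1
      rwa [one_mul] at h3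
    have h2 := hspan x (hJle hxJ)
    rw [PowerSeries.X_pow_dvd_iff] at h2
    exact hxm (h2 m h1)
  have hxunit : IsUnit x := by
    rw [PowerSeries.isUnit_iff_constantCoeff]
    apply WittVector.isUnit_of_coeff_zero_ne_zero
    have h2 : (PowerSeries.coeff 0) (PowerSeries.map (resW p k) x) ≠ 0 := hm0 ▸ hxm
    rw [PowerSeries.coeff_map, PowerSeries.coeff_zero_eq_constantCoeff_apply, resW_apply] at h2
    exact h2
  have hJtop : J = ⊤ := Ideal.eq_top_of_isUnit_mem _ hxJ hxunit
  have hpnI : (p : PowerSeries (WittVector p k)) ^ n ∈ I := by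
    have h1 : (1 : PowerSeries (WittVector p k)) ∈ J := hJtop ▸ Submodule.mem_top
    simpa using (hJmem 1).mp h1
  refine ⟨n, le_antisymm hPn ?_⟩
  rw [Ideal.span_le]
  simpa using hpnI
end

section
/- Let φ : 𝔖 → 𝔖 (𝔖 = W[[u]]) be Frobenius (Witt Frobenius on W, u ↦ u^p), and ev_N : 𝔖 → W[p^{1/N}] the evaluation u ↦ p^{1/N}. If f(u) = Σ a_i u^i ∈ 𝔖 and the minimum of v_p(a_i) + i/N over i is attained uniquely at i = j with value m + j/N, and jp/N < 1, then the valuation of ev_N(φ(f)) equals m + jp/N, which is strictly greater than m + j/N when j > 0. -/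
open PowerSeries

namespace Stmt14Aux

variable {p : ℕ} [hp : Fact p.Prime] {k : Type} [Field k] [CharP k p] [PerfectRing k p]

local notation "W" => WittVector p k

set_option linter.unusedSectionVars false

lemma pow_dvd_of_coeff_eq_zero : ∀ (n : ℕ) (x : W), (∀ i < n, x.coeff i = 0) →
    (p : W) ^ n ∣ x := by
  intro n
  induction n with
  | zero => intro x _; simp
  | succ n ih =>
    intro x h
    set y : W := WittVector.mk p (fun i => x.coeff (i + 1)) with hy
    set z : W := (WittVector.frobeniusEquiv p k).symm y with hz
    have hFz : WittVector.frobenius z = y := by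
      have := (WittVector.frobeniusEquiv p k).apply_symm_apply y
      rw [hz]; simpa [WittVector.frobeniusEquiv_apply] using this
    have hx : x = z * p := by
      rw [← WittVector.verschiebung_frobenius z, hFz]
      apply WittVector.ext
      intro i
      cases i with
      | zero => rw [WittVector.verschiebung_coeff_zero]; exact (h 0 (Nat.succ_pos n))
      | succ i => rw [WittVector.verschiebung_coeff_succ, hy, WittVector.coeff_mk]
    have hzc : ∀ i < n, z.coeff i = 0 := by
      intro i hi
      have h1 : (WittVector.frobenius z).coeff i = z.coeff i ^ p := by
        rw [WittVector.coeff_frobenius_charP]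
      rw [hFz, hy, WittVector.coeff_mk] at h1
      have h2 : z.coeff i ^ p = 0 := by rw [← h1]; exact h (i + 1) (Nat.succ_lt_succ hi)
      exact pow_eq_zero_iff hp.out.ne_zero |>.mp h2
    rw [hx, pow_succ]
    exact mul_dvd_mul (ih z hzc) dvd_rfl

lemma coeff_eq_zero_of_pow_dvd : ∀ (n : ℕ) (x : W), (p : W) ^ n ∣ x →
    ∀ i < n, x.coeff i = 0 := by
  intro n
  induction n with
  | zero => intro x _ i hi; omega
  | succ n ih =>
    intro x hx i hi
    obtain ⟨c, rfl⟩ := hx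
    have hx2 : (p : W) ^ (n + 1) * c = ((p : W) ^ n * c) * p := by ring
    rw [hx2, ← WittVector.verschiebung_frobenius]
    cases i with
    | zero => rw [WittVector.verschiebung_coeff_zero]
    | succ i =>
      rw [WittVector.verschiebung_coeff_succ, WittVector.coeff_frobenius_charP,
        ih ((p : W) ^ n * c) (Dvd.intro c rfl) i (by omega), zero_pow hp.out.ne_zero]

lemma pow_dvd_sub_iff (n : ℕ) (x y : W) :
    (p : W) ^ n ∣ x - y ↔ ∀ i < n, x.coeff i = y.coeff i := by
  constructor
  · intro h i hi
    have h0 : ∀ i < n, (x - y).coeff i = 0 := coeff_eq_zero_of_pow_dvd n (x - y) h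
    have ht : WittVector.truncate n (x - y) = 0 := by
      apply TruncatedWittVector.ext
      intro i2
      rw [WittVector.coeff_truncate, TruncatedWittVector.coeff_zero]
      exact h0 i2 i2.isLt
    rw [map_sub, sub_eq_zero] at ht
    calc x.coeff i = TruncatedWittVector.coeff ⟨i, hi⟩ (WittVector.truncate n x) :=
          (WittVector.coeff_truncate x ⟨i, hi⟩).symm
      _ = TruncatedWittVector.coeff ⟨i, hi⟩ (WittVector.truncate n y) := by rw [ht]
      _ = y.coeff i := WittVector.coeff_truncate y ⟨i, hi⟩
  · intro h
    apply pow_dvd_of_coeff_eq_zero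
    intro i hi
    have ht0 : WittVector.truncate n x = WittVector.truncate n y := by
      apply TruncatedWittVector.ext
      intro i2
      rw [WittVector.coeff_truncate, WittVector.coeff_truncate]
      exact h i2 i2.isLt
    have ht : WittVector.truncate n (x - y) = 0 := by
      rw [map_sub, ht0, sub_self]
    calc (x - y).coeff i
        = TruncatedWittVector.coeff ⟨i, hi⟩ (WittVector.truncate n (x - y)) :=
          (WittVector.coeff_truncate (x - y) ⟨i, hi⟩).symm
      _ = TruncatedWittVector.coeff ⟨i, hi⟩ (0 : TruncatedWittVector p n k) := by rw [ht]
      _ = 0 := TruncatedWittVector.coeff_zero p n k ⟨i, hi⟩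

lemma eq_zero_of_forall_pow_dvd (x : W) (h : ∀ n : ℕ, (p : W) ^ n ∣ x) : x = 0 := by
  apply WittVector.ext
  intro i
  rw [WittVector.zero_coeff]
  exact coeff_eq_zero_of_pow_dvd (i + 1) x (h (i + 1)) i (Nat.lt_succ_self i)

lemma exists_limit (a : ℕ → W) (ha : ∀ R, (p : W) ^ R ∣ a (R + 1) - a R) :
    ∃ L : W, ∀ R, (p : W) ^ R ∣ L - a R := by
  have stab : ∀ R, ∀ i < R, (a R).coeff i = (a (i + 1)).coeff i := by
    intro R
    induction R with
    | zero => intro i hi; omega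
    | succ R ih =>
      intro i hi
      rcases Nat.lt_or_ge i R with h' | h'
      · rw [← ih i h']
        exact (pow_dvd_sub_iff R _ _).mp (ha R) i h'
      · have : i = R := by omega
        subst this; rfl
  refine ⟨WittVector.mk p (fun i => (a (i + 1)).coeff i), fun R => ?_⟩
  rw [pow_dvd_sub_iff]
  intro i hi
  rw [WittVector.coeff_mk]
  exact (stab R i hi).symm

lemma coeff_pow_p_mul (n : ℕ) (b : W) :
    ((p : W) ^ n * b).coeff n = b.coeff 0 ^ p ^ n := by
  induction n with
  | zero => simp
  | succ n ih =>
    have h : (p : W) ^ (n + 1) * b = ((p : W) ^ n * b) * p := by ring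
    rw [h, ← WittVector.verschiebung_frobenius, WittVector.verschiebung_coeff_succ,
      WittVector.coeff_frobenius_charP, ih, ← pow_mul, ← pow_succ]

lemma powerSeries_split {R : Type*} [CommRing R] (D : ℕ) (h : PowerSeries R) :
    h = (∑ i ∈ Finset.range D,
          PowerSeries.C (PowerSeries.coeff i h) * PowerSeries.X ^ i)
      + PowerSeries.X ^ D * PowerSeries.mk (fun n => PowerSeries.coeff (n + D) h) := by
  ext n
  rw [map_add, PowerSeries.coeff_X_pow_mul', map_sum]
  simp only [PowerSeries.coeff_C_mul_X_pow, PowerSeries.coeff_mk, Finset.sum_ite_eq,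
    Finset.mem_range]
  rcases Nat.lt_or_ge n D with hn | hn
  · rw [if_pos hn, if_neg (by omega)]
    ring
  · rw [if_neg (by omega), if_pos hn, Nat.sub_add_cancel hn]
    ring

lemma exists_division (Nn : ℕ) (h : PowerSeries W) :
    ∃ (b : ℕ → W) (q : PowerSeries W),
      h = (∑ s ∈ Finset.range Nn, PowerSeries.C (b s) * PowerSeries.X ^ s)
        + q * (PowerSeries.X ^ Nn - PowerSeries.C (p : W)) := by
  set A : ℕ → ℕ → W := fun i R =>
    ∑ r ∈ Finset.range R, (p : W) ^ r * PowerSeries.coeff (i + (r + 1) * Nn) h with hAdef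
  have hA : ∀ i R, (p : W) ^ R ∣ A i (R + 1) - A i R := by
    intro i R
    have : A i (R + 1) - A i R = (p : W) ^ R * PowerSeries.coeff (i + (R + 1) * Nn) h := by
      rw [hAdef]; beta_reduce; rw [Finset.sum_range_succ]; ring
    rw [this]
    exact Dvd.intro _ rfl
  choose L hL using fun i => exists_limit (A i) (hA i)
  have key : ∀ i R, A i (R + 1) = PowerSeries.coeff (i + Nn) h + p * A (i + Nn) R := by
    intro i R
    rw [hAdef]
    beta_reduce
    rw [Finset.sum_range_succ']
    rw [Finset.mul_sum]
    rw [add_comm]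
    congr 1
    · simp
    · apply Finset.sum_congr rfl
      intro r _
      have : i + (r + 1 + 1) * Nn = i + Nn + (r + 1) * Nn := by ring
      rw [this, pow_succ]
      ring
  have hrec : ∀ i, L i = PowerSeries.coeff (i + Nn) h + p * L (i + Nn) := by
    intro i
    have hz : ∀ R : ℕ, (p : W) ^ R ∣
        L i - (PowerSeries.coeff (i + Nn) h + p * L (i + Nn)) := by
      intro R
      have h1 := hL i (R + 1)
      have h2 := hL (i + Nn) R
      have he : L i - (PowerSeries.coeff (i + Nn) h + p * L (i + Nn))
          = (L i - A i (R + 1)) - p * (L (i + Nn) - A (i + Nn) R) := by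
        rw [key i R]; ring
      rw [he]
      exact dvd_sub (dvd_trans (pow_dvd_pow _ (Nat.le_succ R)) h1) (h2.mul_left p)
    exact sub_eq_zero.mp (eq_zero_of_forall_pow_dvd _ hz)
  refine ⟨fun s => PowerSeries.coeff s h + p * L s, PowerSeries.mk L, ?_⟩
  ext n
  rw [map_add, map_sum, mul_sub, map_sub]
  rw [mul_comm (PowerSeries.mk L) (PowerSeries.X ^ Nn), PowerSeries.coeff_X_pow_mul']
  rw [mul_comm (PowerSeries.mk L) (PowerSeries.C (p : W)), PowerSeries.coeff_C_mul]
  simp only [PowerSeries.coeff_C_mul_X_pow, PowerSeries.coeff_mk, Finset.sum_ite_eq,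
    Finset.mem_range]
  rcases Nat.lt_or_ge n Nn with hn | hn
  · rw [if_pos hn, if_neg (by omega)]
    ring
  · rw [if_neg (by omega), if_pos hn]
    have := hrec (n - Nn)
    rw [Nat.sub_add_cancel hn] at this
    rw [this]
    ring

lemma arith_main {N p m j d i : ℕ} (hN : 1 ≤ N) (hp2 : 2 ≤ p) (hjpN : j * p + 1 ≤ N)
    (h : m * N + j + 1 ≤ d * N + i) :
    m * N + (j * p + 1) ≤ d * N + i * p := by
  zify at h hjpN ⊢
  have hNz : (1:ℤ) ≤ (N:ℤ) := by exact_mod_cast hN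
  have hpz : (2:ℤ) ≤ (p:ℤ) := by exact_mod_cast hp2
  rcases Nat.lt_or_ge j i with hlt | hge
  · have hlt' : (j:ℤ) + 1 ≤ (i:ℤ) := by exact_mod_cast hlt
    nlinarith [mul_le_mul_of_nonneg_right hlt' (by linarith : (0:ℤ) ≤ (p:ℤ) - 1)]
  · have hge' : (i:ℤ) ≤ (j:ℤ) := by exact_mod_cast hge
    have hd : (m:ℤ) + 1 ≤ (d:ℤ) := by
      by_contra h'
      push_neg at h'
      have h'' : (d:ℤ) ≤ (m:ℤ) := by linarith
      have := mul_le_mul_of_nonneg_right h'' (by linarith : (0:ℤ) ≤ (N:ℤ))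
      linarith
    have h2 : (m:ℤ) * N + N ≤ (d:ℤ) * N := by
      nlinarith [mul_le_mul_of_nonneg_right hd (by linarith : (0:ℤ) ≤ (N:ℤ))]
    have h3 : (0:ℤ) ≤ (i:ℤ) * (p:ℤ) :=
      mul_nonneg (Int.natCast_nonneg i) (Int.natCast_nonneg p)
    nlinarith

lemma nsmul_coe (n : ℕ) (q : ℚ) :
    n • ((q : WithTop ℚ)) = ((n * q : ℚ) : WithTop ℚ) := by
  induction n with
  | zero => simp
  | succ n ih =>
    rw [succ_nsmul, ih, ← WithTop.coe_add]
    apply congrArg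
    push_cast
    ring

end Stmt14Aux
set_option maxHeartbeats 4000000 in
set_option synthInstance.maxHeartbeats 1000000 in
/-- Let `φ : 𝔖 → 𝔖` be the Frobenius (Witt Frobenius on `W`, `u ↦ u^p`), and
`ev_N : 𝔖 → W[p^{1/N}] = 𝔖/(u^N − p)` the evaluation `u ↦ p^{1/N}`, with `v` the `ℚ`-valued
additive valuation as in Statement 13. If `f = Σ a_i u^i ∈ 𝔖`, the minimum of
`v_p(a_i) + i/N` is attained uniquely at `i = j` with value `m + j/N`, and `jp/N < 1`, then
`v(ev_N(φ f)) = m + jp/N` — which is strictly greater than `m + j/N` when `j > 0`. -/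
theorem stmt14 (p : ℕ) [Fact p.Prime] (k : Type) [Field k] [CharP k p] [PerfectRing k p]
    (N : ℕ) (hN : 1 ≤ N)
    (φ : PowerSeries (WittVector p k) →+* PowerSeries (WittVector p k))
    (hφC : ∀ a : WittVector p k, φ (C a) = C (WittVector.frobenius a))
    (hφX : φ (X : PowerSeries (WittVector p k)) = X ^ p)
    (v : AddValuation
      (PowerSeries (WittVector p k) ⧸
        Ideal.span {(X : PowerSeries (WittVector p k)) ^ N - C (p : WittVector p k)})
      (WithTop ℚ))
    (hvW : ∀ (a : WittVector p k) (m : ℕ),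
      ((p : WittVector p k) ^ m ∣ a ∧ ¬ (p : WittVector p k) ^ (m + 1) ∣ a) →
      v (Ideal.Quotient.mk _ (C a)) = ((m : ℚ) : WithTop ℚ))
    (hvX : v (Ideal.Quotient.mk _ (X : PowerSeries (WittVector p k))) =
      ((1 / (N : ℚ) : ℚ) : WithTop ℚ))
    (f : PowerSeries (WittVector p k)) (j m : ℕ)
    -- `v_p(a_j) = m`
    (hvj : (p : WittVector p k) ^ m ∣ coeff j f ∧
      ¬ (p : WittVector p k) ^ (m + 1) ∣ coeff j f)
    -- the minimum of `v_p(a_i) + i/N` is attained uniquely at `i = j`, with value `m + j/N`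
    (huniq : ∀ i : ℕ, i ≠ j → ∃ d : ℕ,
      (m : ℚ) + (j : ℚ) / (N : ℚ) < (d : ℚ) + (i : ℚ) / (N : ℚ) ∧
      (p : WittVector p k) ^ d ∣ coeff i f)
    -- `jp/N < 1`
    (hjp : (j : ℚ) * (p : ℚ) / (N : ℚ) < 1) :
    v (Ideal.Quotient.mk _ (φ f)) =
      (((m : ℚ) + (j : ℚ) * (p : ℚ) / (N : ℚ) : ℚ) : WithTop ℚ)
    ∧ (0 < j →
        (((m : ℚ) + (j : ℚ) / (N : ℚ) : ℚ) : WithTop ℚ) <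
        (((m : ℚ) + (j : ℚ) * (p : ℚ) / (N : ℚ) : ℚ) : WithTop ℚ)) := by
  classical
  have hp2 : 2 ≤ p := (Fact.out : p.Prime).two_le
  have hNQ : (0 : ℚ) < (N : ℚ) := by exact_mod_cast hN
  set π := Ideal.Quotient.mk (Ideal.span
      {(X : PowerSeries (WittVector p k)) ^ N - C (p : WittVector p k)})
    with hπ
  -- valuation of C p is 1
  have hvCp : v (π (C (p : WittVector p k))) = ((1 : ℚ) : WithTop ℚ) := by
    have h2 : ¬ (p : WittVector p k) ^ (1 + 1) ∣ (p : WittVector p k) := by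
      intro hd
      have h0 := Stmt14Aux.coeff_eq_zero_of_pow_dvd 2 (p : WittVector p k) hd 1 (by omega)
      rw [WittVector.coeff_p_one] at h0
      exact one_ne_zero h0
    have := hvW (p : WittVector p k) 1 ⟨by simpa using dvd_rfl, h2⟩
    simpa using this
  -- valuation of C w is nonnegative
  have vC_nonneg : ∀ w : WittVector p k, (0 : WithTop ℚ) ≤ v (π (C w)) := by
    intro w
    by_cases hw : w = 0
    · subst hw
      rw [RingHom.map_zero, RingHom.map_zero, v.map_zero]
      exact le_top
    · obtain ⟨m', b, hb0, rfl⟩ := WittVector.exists_eq_pow_p_mul w hw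
      have hnd : ¬ (p : WittVector p k) ^ (m' + 1) ∣ (p : WittVector p k) ^ m' * b := by
        intro hd
        have h0 := Stmt14Aux.coeff_eq_zero_of_pow_dvd (m' + 1) _ hd m' (Nat.lt_succ_self m')
        rw [Stmt14Aux.coeff_pow_p_mul] at h0
        exact hb0 ((pow_eq_zero_iff (pow_ne_zero m' (Fact.out : p.Prime).ne_zero)).mp h0)
      rw [hvW _ m' ⟨⟨b, rfl⟩, hnd⟩]
      exact_mod_cast (by positivity : (0 : ℚ) ≤ (m' : ℚ))
  -- valuation of C w at least d when p^d divides w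
  have vC_dvd : ∀ (w : WittVector p k) (d : ℕ), (p : WittVector p k) ^ d ∣ w →
      ((d : ℚ) : WithTop ℚ) ≤ v (π (C w)) := by
    intro w d hd
    obtain ⟨c, rfl⟩ := hd
    simp only [map_mul, map_pow]
    rw [v.map_mul, v.map_pow, hvCp, Stmt14Aux.nsmul_coe]
    have h0 := vC_nonneg c
    calc ((d : ℚ) : WithTop ℚ) = ((d * 1 : ℚ) : WithTop ℚ) + 0 := by
          rw [add_zero, mul_one]
      _ ≤ _ := add_le_add le_rfl h0
  -- valuation on the quotient is nonnegative
  have vNonneg : ∀ g : PowerSeries (WittVector p k), (0 : WithTop ℚ) ≤ v (π g) := by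
    intro g
    obtain ⟨b, q, hg⟩ := Stmt14Aux.exists_division N g
    have hq0 : π (q * ((X : PowerSeries (WittVector p k)) ^ N - C (p : WittVector p k))) = 0 := by
      rw [hπ]
      exact Ideal.Quotient.eq_zero_iff_mem.mpr
        (Ideal.mem_span_singleton.mpr (dvd_mul_left _ q))
    rw [hg, map_add, hq0, add_zero, map_sum]
    apply v.map_le_sum
    intro s _
    simp only [map_mul, map_pow]
    rw [v.map_mul, v.map_pow, hvX, Stmt14Aux.nsmul_coe]
    have h1 := vC_nonneg (b s)
    have h2 : (0 : WithTop ℚ) ≤ (((s : ℚ) * (1 / (N : ℚ)) : ℚ) : WithTop ℚ) := by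
      exact_mod_cast (by positivity : (0 : ℚ) ≤ (s : ℚ) * (1 / (N : ℚ)))
    calc (0 : WithTop ℚ) = 0 + 0 := (add_zero 0).symm
      _ ≤ _ := add_le_add h1 h2
  -- main term coefficient facts
  obtain ⟨cj, hcj⟩ := hvj.1
  have hfd : (p : WittVector p k) ^ m ∣ WittVector.frobenius (coeff j f) := by
    rw [hcj, map_mul, map_pow, map_natCast]
    exact ⟨_, rfl⟩
  have hfnd : ¬ (p : WittVector p k) ^ (m + 1) ∣ WittVector.frobenius (coeff j f) := by
    rintro ⟨c, hc⟩
    apply hvj.2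
    refine ⟨(WittVector.frobeniusEquiv p k).symm c, ?_⟩
    have h1 := congrArg (WittVector.frobeniusEquiv p k).symm hc
    rw [map_mul, map_pow, map_natCast] at h1
    have h0 : (WittVector.frobeniusEquiv p k).symm (WittVector.frobenius (coeff j f))
        = coeff j f := by
      rw [← WittVector.frobeniusEquiv_apply]
      exact (WittVector.frobeniusEquiv p k).symm_apply_apply _
    rw [h0] at h1
    exact h1
  have hvmainC : v (π (C (WittVector.frobenius (coeff j f)))) = ((m : ℚ) : WithTop ℚ) :=
    hvW _ m ⟨hfd, hfnd⟩
  -- jp + 1 ≤ N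
  have hjpN : j * p + 1 ≤ N := by
    have h1 : (j : ℚ) * (p : ℚ) < (N : ℚ) := (div_lt_one hNQ).mp hjp
    have h2 : j * p < N := by exact_mod_cast h1
    omega
  -- decomposition of φ f
  set D := N * (m + 1) + (j + 1) with hD
  have hjD : j ∈ Finset.range D := Finset.mem_range.mpr (by omega)
  set fT := PowerSeries.mk (fun n => coeff (n + D) f) with hfT
  have hφf : φ f = (C (WittVector.frobenius (coeff j f)) * (X ^ p) ^ j)
      + ((∑ i ∈ (Finset.range D).erase j,
            C (WittVector.frobenius (coeff i f)) * (X ^ p) ^ i)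
         + (X ^ p) ^ D * φ fT) := by
    conv_lhs => rw [Stmt14Aux.powerSeries_split D f]
    rw [map_add, map_mul, map_pow, hφX, map_sum]
    rw [Finset.sum_congr rfl (fun i _ => by rw [map_mul, map_pow, hφC, hφX] :
      ∀ i ∈ Finset.range D, φ (C (coeff i f) * X ^ i)
        = C (WittVector.frobenius (coeff i f)) * (X ^ p) ^ i)]
    rw [← Finset.add_sum_erase _ _ hjD, add_assoc]
  -- valuation of powers of X^p
  have hXp_pow : ∀ t : ℕ, v (π (((X : PowerSeries (WittVector p k)) ^ p) ^ t))
      = (((t : ℚ) * ((p : ℚ) * (1 / (N : ℚ))) : ℚ) : WithTop ℚ) := by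
    intro t
    simp only [map_pow]
    rw [v.map_pow, v.map_pow, hvX, Stmt14Aux.nsmul_coe, Stmt14Aux.nsmul_coe]
  -- value of main term
  have hT : v (π (C (WittVector.frobenius (coeff j f)) * (X ^ p) ^ j))
      = (((m : ℚ) + (j : ℚ) * (p : ℚ) / (N : ℚ) : ℚ) : WithTop ℚ) := by
    rw [map_mul, v.map_mul, hvmainC, hXp_pow, ← WithTop.coe_add]
    exact WithTop.coe_eq_coe.mpr (by ring)
  -- the cutoff value
  set c : ℚ := (m : ℚ) + ((j : ℚ) * (p : ℚ) + 1) / (N : ℚ) with hc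
  have hcg : (((m : ℚ) + (j : ℚ) * (p : ℚ) / (N : ℚ) : ℚ) : WithTop ℚ) < (c : WithTop ℚ) := by
    apply WithTop.coe_lt_coe.mpr
    rw [hc]
    have : (j : ℚ) * (p : ℚ) / (N : ℚ) < ((j : ℚ) * (p : ℚ) + 1) / (N : ℚ) := by
      rw [div_lt_div_iff₀ hNQ hNQ]
      nlinarith
    linarith
  -- bound for the erased sum
  have hsum : (c : WithTop ℚ) ≤ v (π (∑ i ∈ (Finset.range D).erase j,
      C (WittVector.frobenius (coeff i f)) * (X ^ p) ^ i)) := by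
    rw [map_sum]
    apply v.map_le_sum
    intro i hi
    have hij : i ≠ j := (Finset.mem_erase.mp hi).1
    obtain ⟨d, hdlt, hddvd⟩ := huniq i hij
    rw [map_mul, v.map_mul, hXp_pow]
    have h1 : ((d : ℚ) : WithTop ℚ) ≤ v (π (C (WittVector.frobenius (coeff i f)))) := by
      apply vC_dvd
      obtain ⟨e, he⟩ := hddvd
      rw [he, map_mul, map_pow, map_natCast]
      exact ⟨_, rfl⟩
    have hnat : m * N + j + 1 ≤ d * N + i := by
      have h1' := mul_lt_mul_of_pos_right hdlt hNQ
      have e1 : ((m : ℚ) + (j : ℚ) / (N : ℚ)) * (N : ℚ) = (m : ℚ) * N + j := by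
        field_simp
      have e2 : ((d : ℚ) + (i : ℚ) / (N : ℚ)) * (N : ℚ) = (d : ℚ) * N + i := by
        field_simp
      rw [e1, e2] at h1'
      have h2' : m * N + j < d * N + i := by exact_mod_cast h1'
      omega
    have hnat2 := Stmt14Aux.arith_main hN hp2 hjpN hnat
    have harith : c ≤ (d : ℚ) + (i : ℚ) * ((p : ℚ) * (1 / (N : ℚ))) := by
      have hq2 : ((m * N + (j * p + 1) : ℕ) : ℚ) ≤ ((d * N + i * p : ℕ) : ℚ) := by
        exact_mod_cast hnat2
      have e3 : c = ((m * N + (j * p + 1) : ℕ) : ℚ) / (N : ℚ) := by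
        rw [hc]; push_cast; field_simp
      have e4 : (d : ℚ) + (i : ℚ) * ((p : ℚ) * (1 / (N : ℚ)))
          = ((d * N + i * p : ℕ) : ℚ) / (N : ℚ) := by
        push_cast; field_simp
      rw [e3, e4]
      gcongr
    calc (c : WithTop ℚ)
        ≤ (((d : ℚ) + (i : ℚ) * ((p : ℚ) * (1 / (N : ℚ))) : ℚ) : WithTop ℚ) :=
          WithTop.coe_le_coe.mpr harith
      _ = ((d : ℚ) : WithTop ℚ) + (((i : ℚ) * ((p : ℚ) * (1 / (N : ℚ))) : ℚ) : WithTop ℚ) := by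
          rw [← WithTop.coe_add]
      _ ≤ _ := add_le_add h1 le_rfl
  -- bound for the tail
  have htail : (c : WithTop ℚ) ≤ v (π ((X ^ p) ^ D * φ fT)) := by
    rw [map_mul, v.map_mul, hXp_pow]
    have h0 := vNonneg (φ fT)
    have hnat3 : m * N + (j * p + 1) ≤ D * p := by
      have h1 : (D : ℤ) * 1 ≤ (D : ℤ) * p := by
        apply mul_le_mul_of_nonneg_left _ (Int.natCast_nonneg D)
        exact_mod_cast (by omega : 1 ≤ p)
      have h2 : (D : ℤ) = N * m + N + (j + 1) := by rw [hD]; push_cast; ring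
      zify
      have h3 : (j : ℤ) * p + 1 ≤ N := by exact_mod_cast hjpN
      nlinarith
    have harith2 : c ≤ (D : ℚ) * ((p : ℚ) * (1 / (N : ℚ))) := by
      have hq2 : ((m * N + (j * p + 1) : ℕ) : ℚ) ≤ ((D * p : ℕ) : ℚ) := by
        exact_mod_cast hnat3
      have e3 : c = ((m * N + (j * p + 1) : ℕ) : ℚ) / (N : ℚ) := by
        rw [hc]; push_cast; field_simp
      have e4 : (D : ℚ) * ((p : ℚ) * (1 / (N : ℚ))) = ((D * p : ℕ) : ℚ) / (N : ℚ) := by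
        push_cast; field_simp
      rw [e3, e4]
      gcongr
    calc (c : WithTop ℚ)
        ≤ (((D : ℚ) * ((p : ℚ) * (1 / (N : ℚ))) : ℚ) : WithTop ℚ) :=
          WithTop.coe_le_coe.mpr harith2
      _ = (((D : ℚ) * ((p : ℚ) * (1 / (N : ℚ))) : ℚ) : WithTop ℚ) + 0 := (add_zero _).symm
      _ ≤ _ := add_le_add le_rfl h0
  have hRest : (c : WithTop ℚ) ≤ v (π ((∑ i ∈ (Finset.range D).erase j,
      C (WittVector.frobenius (coeff i f)) * (X ^ p) ^ i) + (X ^ p) ^ D * φ fT)) := by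
    rw [map_add]
    exact le_trans (le_min hsum htail) (v.map_add _ _)
  constructor
  · have hlt : v (π (C (WittVector.frobenius (coeff j f)) * (X ^ p) ^ j))
        < v (π ((∑ i ∈ (Finset.range D).erase j,
            C (WittVector.frobenius (coeff i f)) * (X ^ p) ^ i)
          + (X ^ p) ^ D * φ fT)) := by
      rw [hT]
      exact lt_of_lt_of_le hcg hRest
    rw [hφf, map_add, v.map_add_eq_of_lt_left hlt, hT]
  · intro hj0
    apply WithTop.coe_lt_coe.mpr
    have hj1 : (1 : ℚ) ≤ (j : ℚ) := by exact_mod_cast hj0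
    have hp1 : (2 : ℚ) ≤ (p : ℚ) := by exact_mod_cast hp2
    have h1 : (j : ℚ) * 1 < (j : ℚ) * (p : ℚ) := by nlinarith
    have h2 := mul_lt_mul_of_pos_right h1 (by positivity : (0:ℚ) < 1 / (N : ℚ))
    have e5 : (j : ℚ) * 1 * (1 / (N : ℚ)) = (j : ℚ) / (N : ℚ) := by field_simp
    have e6 : (j : ℚ) * (p : ℚ) * (1 / (N : ℚ)) = (j : ℚ) * (p : ℚ) / (N : ℚ) := by field_simp
    rw [e5, e6] at h2
    linarith
end

section
/- Let M be a rank-one free module over 𝔖 = W[[u]] with generator t, equipped with a φ-semilinear endomorphism φ_M satisfying φ_M(t) = c·E(u)^r·t for a unit c ∈ 𝔖^× and an Eisenstein polynomial E(u). Suppose β : N → M is a morphism from a Kisin module N of height ≤ r (i.e. 𝔖·φ_N(N) ⊇ E(u)^r N) compatible with the φ-structures, with nonzero image I·t for an ideal I ⊆ 𝔖. Then 𝔖·φ(I) ⊇ I, and hence I = (p^n) for some n ∈ ℕ. -/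
open PowerSeries

section Aux

variable {A : Type} [CommRing A]

private lemma aux_greatest {P : ℕ → Prop} (h0 : P 0) (hbound : ∃ m, ¬ P m) :
    ∃ n, P n ∧ ¬ P (n + 1) := by
  classical
  set m0 := Nat.find hbound with hm0
  have hspec : ¬ P m0 := Nat.find_spec hbound
  have hm0pos : m0 ≠ 0 := fun h => hspec (h ▸ h0)
  refine ⟨m0 - 1, ?_, ?_⟩
  · by_contra hcon
    have := Nat.find_min' hbound hcon
    omega
  · have : m0 - 1 + 1 = m0 := by omega
    rw [this]
    exact hspec

private lemma aux_pS (p : ℕ) : (p : PowerSeries A) = C (p : A) := by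
  rw [map_natCast]

private lemma aux_pdvd (p j : ℕ) (f : PowerSeries A) :
    (p : PowerSeries A) ^ j ∣ f ↔ ∀ i, (p : A) ^ j ∣ (coeff i) f := by
  constructor
  · rintro ⟨g, rfl⟩ i
    rw [aux_pS, ← map_pow, coeff_C_mul]
    exact Dvd.intro _ rfl
  · intro h
    refine ⟨PowerSeries.mk fun i => (h i).choose, ?_⟩
    refine PowerSeries.ext fun i => ?_
    rw [aux_pS, ← map_pow, coeff_C_mul, coeff_mk]
    exact (h i).choose_spec

set_option maxHeartbeats 3200000 in
/-- Key lemma: a nonzero ideal `I ⊆ A[[X]]` (`A` "like `W(k)`") with `I ⊆ 𝔖·φ(I)`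
equals `(p^n)`. -/
private lemma aux_key [IsDomain A] (p : ℕ) (hp2 : 2 ≤ p)
    (hpA : (p : A) ≠ 0)
    (hAunit : ∀ a : A, ¬ (p : A) ∣ a → IsUnit a)
    (hAfin : ∀ a : A, a ≠ 0 → ∃ m, ¬ (p : A) ^ m ∣ a)
    (φ : PowerSeries A →+* PowerSeries A) (hφX : φ (X : PowerSeries A) = X ^ p)
    (I : Ideal (PowerSeries A)) (hne : I ≠ ⊥)
    (hstab : I ≤ Ideal.span (φ '' I)) :
    ∃ n : ℕ, I = Ideal.span {(p : PowerSeries A) ^ n} := by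
  classical
  have hpS_ne : (p : PowerSeries A) ≠ 0 := by
    intro h
    have : (p : A) = 0 := by
      have := congrArg (constantCoeff) h
      simpa using this
    exact hpA this
  -- Step 1: the largest `n` with `I ⊆ (p^n)`
  obtain ⟨f, hfI, hf0⟩ := Submodule.ne_bot_iff I |>.mp hne
  have hfc : ∃ i, (coeff i) f ≠ 0 := by
    refine Classical.byContradiction fun h => ?_
    simp only [ne_eq, not_exists, not_not] at h
    exact hf0 (PowerSeries.ext fun i => by simpa using h i)
  obtain ⟨i, hi⟩ := hfc
  obtain ⟨m, hm⟩ := hAfin _ hi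
  have hPexists : ∃ j, ¬ I ≤ Ideal.span {(p : PowerSeries A) ^ j} := by
    refine ⟨m, fun hle => ?_⟩
    have := Ideal.mem_span_singleton.mp (hle hfI)
    exact hm (((aux_pdvd p m f).mp this) i)
  have hP0 : I ≤ Ideal.span {(p : PowerSeries A) ^ 0} := by
    rw [pow_zero, Ideal.span_singleton_one]; exact le_top
  obtain ⟨n, hPn, hPn1⟩ := aux_greatest hP0 hPexists
  have hpSn_ne : (p : PowerSeries A) ^ n ≠ 0 := pow_ne_zero _ hpS_ne
  -- Step 2: the ideal I' with p^n I' = I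
  set I' : Ideal (PowerSeries A) := Submodule.comap (LinearMap.lsmul (PowerSeries A) (PowerSeries A) ((p : PowerSeries A) ^ n)) I with hI'
  have hI'mem : ∀ g, g ∈ I' ↔ (p : PowerSeries A) ^ n * g ∈ I := by
    intro g
    simp [hI', Submodule.mem_comap, LinearMap.lsmul_apply, smul_eq_mul]
  have hsplit : ∀ f ∈ I, ∃ g ∈ I', f = (p : PowerSeries A) ^ n * g := by
    intro f hf
    obtain ⟨g, rfl⟩ := Ideal.mem_span_singleton.mp (hPn hf)
    exact ⟨g, (hI'mem g).mpr hf, rfl⟩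
  -- Step 3: I' is also φ-stable
  set J' := Ideal.span (φ '' (I' : Set (PowerSeries A))) with hJ'
  have himg : Ideal.span (φ '' (I : Set (PowerSeries A))) ≤ Ideal.span {(p : PowerSeries A) ^ n} * J' := by
    rw [Ideal.span_le]
    rintro y ⟨f, hf, rfl⟩
    obtain ⟨g, hgI', rfl⟩ := hsplit f hf
    have : φ ((p : PowerSeries A) ^ n * g) = (p : PowerSeries A) ^ n * φ g := by
      rw [map_mul, map_pow, map_natCast]
    rw [this]
    exact Ideal.mul_mem_mul (Ideal.mem_span_singleton_self _)
      (Ideal.subset_span ⟨g, hgI', rfl⟩)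
  have hstab' : ∀ g ∈ I', g ∈ J' := by
    intro g hg
    have h1 : (p : PowerSeries A) ^ n * g ∈ Ideal.span {(p : PowerSeries A) ^ n} * J' :=
      himg (hstab ((hI'mem g).mp hg))
    obtain ⟨v, hv, hveq⟩ := Ideal.mem_span_singleton_mul.mp h1
    have : v = g := mul_left_cancel₀ hpSn_ne hveq
    exact this ▸ hv
  -- Step 4: an element of I' not divisible by p
  have hg0 : ∃ g ∈ I', ¬ (p : PowerSeries A) ∣ g := by
    refine Classical.byContradiction fun h => ?_
    simp only [not_exists, not_and, not_not] at h
    apply hPn1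
    intro f hf
    obtain ⟨g, hgI', rfl⟩ := hsplit f hf
    obtain ⟨d, rfl⟩ := h g hgI'
    exact Ideal.mem_span_singleton.mpr ⟨d, by ring⟩
  obtain ⟨g0, hg0I', hg0p⟩ := hg0
  -- Step 5: the minimal u-order of I' mod p
  have hQexists : ∃ j, ¬ I' ≤ Ideal.span {(p : PowerSeries A), X ^ j} := by
    refine Classical.byContradiction fun h => ?_
    simp only [not_exists, not_not] at h
    apply hg0p
    rw [show (p : PowerSeries A) = (p : PowerSeries A) ^ 1 by ring, aux_pdvd]
    intro i
    obtain ⟨a, b, hab⟩ := Ideal.mem_span_pair.mp (h (i + 1) hg0I')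
    have hbx : (coeff i) (b * X ^ (i + 1)) = 0 := by
      have : (X : PowerSeries A) ^ (i + 1) ∣ b * X ^ (i + 1) := dvd_mul_left _ _
      exact X_pow_dvd_iff.mp this i (by omega)
    have : (coeff i) g0 = (coeff i) a * (p : A) := by
      rw [← hab, map_add, hbx, add_zero, aux_pS, coeff_mul_C]
    rw [this, pow_one]
    exact dvd_mul_left _ _
  have hQ0 : I' ≤ Ideal.span {(p : PowerSeries A), X ^ 0} := by
    have h1 : (1 : PowerSeries A) ∈ Ideal.span {(p : PowerSeries A), X ^ 0} :=
      Ideal.subset_span (by simp)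
    rw [(Ideal.eq_top_iff_one _).mpr h1]
    exact le_top
  obtain ⟨q, hQq, hQq1⟩ := aux_greatest hQ0 hQexists
  -- Step 6: φ-stability pushes the order up; conclude q = 0
  have htrans : I' ≤ Ideal.span {(p : PowerSeries A), X ^ (p * q)} := by
    intro g hg
    have hg' : g ∈ J' := hstab' g hg
    have : J' ≤ Ideal.span {(p : PowerSeries A), X ^ (p * q)} := by
      rw [hJ', Ideal.span_le]
      rintro y ⟨z, hz, rfl⟩
      obtain ⟨a, b, hab⟩ := Ideal.mem_span_pair.mp (hQq hz)
      have : φ z = φ a * (p : PowerSeries A) + φ b * X ^ (p * q) := by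
        rw [← hab, map_add, map_mul, map_mul, map_natCast, map_pow, hφX, ← pow_mul]
      exact Ideal.mem_span_pair.mpr ⟨φ a, φ b, this.symm⟩
    exact this hg'
  have hq0 : q = 0 := by
    refine Classical.byContradiction fun hqne => ?_
    apply hQq1
    have hle : Ideal.span {(p : PowerSeries A), X ^ (p * q)} ≤ Ideal.span {(p : PowerSeries A), X ^ (q + 1)} := by
      rw [Ideal.span_le]
      rintro y hy
      rcases hy with h | h
      · exact Ideal.subset_span (by simp [h])
      · simp only [Set.mem_singleton_iff] at h
        subst h
        have hq1 : 1 ≤ q := Nat.one_le_iff_ne_zero.mpr hqne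
        have hpq : q + 1 ≤ p * q :=
          le_trans (by omega) (Nat.mul_le_mul_right q hp2)
        refine Ideal.mem_span_pair.mpr ⟨0, X ^ (p * q - (q + 1)), ?_⟩
        rw [zero_mul, zero_add, ← pow_add]
        congr 1
        omega
    exact le_trans htrans hle
  -- Step 7: I' contains a unit, hence I' = ⊤
  obtain ⟨g1, hg1I', hg1⟩ : ∃ g1 ∈ I', g1 ∉ Ideal.span {(p : PowerSeries A), X ^ (q + 1)} := by
    refine Classical.byContradiction fun h => ?_
    simp only [not_exists, not_and, not_not] at h
    exact hQq1 fun z hz => h z hz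
  rw [hq0, zero_add, pow_one] at hg1
  have hg1unit : IsUnit g1 := by
    rw [isUnit_iff_constantCoeff]
    apply hAunit
    intro ⟨cc, hcc⟩
    apply hg1
    have hXdvd : (X : PowerSeries A) ∣ (g1 - C (constantCoeff g1)) := by
      rw [X_dvd_iff, map_sub, constantCoeff_C, sub_self]
    obtain ⟨h1, hh1⟩ := hXdvd
    refine Ideal.mem_span_pair.mpr ⟨C cc, h1, ?_⟩
    have : g1 = C (constantCoeff g1) + X * h1 := by
      rw [← hh1]; ring
    rw [this, hcc, map_mul, aux_pS]
    ring
  have hI'top : I' = ⊤ := Ideal.eq_top_of_isUnit_mem I' hg1I' hg1unit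
  -- Conclusion
  refine ⟨n, le_antisymm hPn ?_⟩
  rw [Ideal.span_singleton_le_iff_mem]
  have : (1 : PowerSeries A) ∈ I' := hI'top ▸ trivial
  simpa using (hI'mem 1).mp this

end Aux

section WittFacts

variable (p : ℕ) [hp : Fact p.Prime] (k : Type) [Field k] [CharP k p] [PerfectRing k p]

private lemma aux_punit (a : WittVector p k) (h : ¬ (p : WittVector p k) ∣ a) : IsUnit a := by
  by_cases ha : a = 0
  · exact absurd (ha ▸ dvd_zero _) h
  obtain ⟨m, u, rfl⟩ := WittVector.exists_eq_pow_p_mul' a ha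
  cases m with
  | zero => simpa using u.isUnit
  | succ m =>
    exact absurd ⟨(p : WittVector p k) ^ m * u, by ring⟩ h

private lemma aux_pfin (a : WittVector p k) (ha : a ≠ 0) :
    ∃ m, ¬ (p : WittVector p k) ^ m ∣ a := by
  obtain ⟨m, u, rfl⟩ := WittVector.exists_eq_pow_p_mul' a ha
  refine ⟨m + 1, fun ⟨d, hd⟩ => ?_⟩
  have hpne : (p : WittVector p k) ^ m ≠ 0 := pow_ne_zero _ (WittVector.p_nonzero p k)
  have h1 : (u : WittVector p k) = (p : WittVector p k) * d := by
    apply mul_left_cancel₀ hpne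
    rw [hd]; ring
  have : IsUnit (p : WittVector p k) := isUnit_of_dvd_unit ⟨d, h1⟩ u.isUnit
  exact (WittVector.irreducible p).not_isUnit this

end WittFacts

/-- Let `M = 𝔖·t` be rank-one free over `𝔖 = W[[u]]` (identified with `𝔖`,
`t = 1`) with `φ_M(t) = c·E(u)^r·t`, `c ∈ 𝔖ˣ`, `E` an Eisenstein polynomial, and let
`β : 𝔑 → M` be a `φ`-compatible morphism from a Kisin module `𝔑` of height `≤ r`
(i.e. `𝔖·φ_𝔑(𝔑) ⊇ E^r 𝔑`), with nonzero image `I·t` for an ideal `I ⊆ 𝔖`. Then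
`𝔖·φ(I) ⊇ I`, and hence `I = (p^n)` for some `n ∈ ℕ`. -/
theorem stmt15 (p : ℕ) [Fact p.Prime] (k : Type) [Field k] [CharP k p] [PerfectRing k p]
    (φ : PowerSeries (WittVector p k) →+* PowerSeries (WittVector p k))
    (hφC : ∀ a : WittVector p k, φ (C a) = C (WittVector.frobenius a))
    (hφX : φ (X : PowerSeries (WittVector p k)) = X ^ p)
    (e : ℕ) (he : 1 ≤ e)
    (E : Polynomial (WittVector p k)) (hmonic : E.Monic) (hdeg : E.natDegree = e)
    (hEis : E.IsEisensteinAt (Ideal.span {(p : WittVector p k)}))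
    (r : ℕ) (c : (PowerSeries (WittVector p k))ˣ)
    (𝔑 : Type) [AddCommGroup 𝔑] [Module (PowerSeries (WittVector p k)) 𝔑]
    [Module.Free (PowerSeries (WittVector p k)) 𝔑]
    [Module.Finite (PowerSeries (WittVector p k)) 𝔑]
    (φN : 𝔑 →+ 𝔑)
    (hsem : ∀ (s : PowerSeries (WittVector p k)) (x : 𝔑), φN (s • x) = φ s • φN x)
    -- `𝔑` has height `≤ r` : `E^r·𝔑 ⊆ 𝔖·φ_𝔑(𝔑)`
    (hheight : ∀ x : 𝔑, ((↑E : PowerSeries (WittVector p k)) ^ r • x) ∈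
      Submodule.span (PowerSeries (WittVector p k)) (Set.range φN))
    (β : 𝔑 →ₗ[PowerSeries (WittVector p k)] PowerSeries (WittVector p k))
    -- compatibility of `β` with the `φ`-structures: `β(φ_𝔑 x) = c·E^r·φ(β x)`
    (hcompat : ∀ x : 𝔑, β (φN x) =
      (c : PowerSeries (WittVector p k)) * (↑E : PowerSeries (WittVector p k)) ^ r * φ (β x))
    (hne : LinearMap.range β ≠ ⊥) :
    (LinearMap.range β : Ideal (PowerSeries (WittVector p k))) ≤
      Ideal.span (φ '' ((LinearMap.range β : Ideal (PowerSeries (WittVector p k))) :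
        Set (PowerSeries (WittVector p k))))
    ∧ ∃ n : ℕ, (LinearMap.range β : Ideal (PowerSeries (WittVector p k))) =
        Ideal.span {(p : PowerSeries (WittVector p k)) ^ n} := by
  set S := PowerSeries (WittVector p k)
  set I : Ideal S := LinearMap.range β with hI
  set J : Ideal S := Ideal.span (φ '' (I : Set S)) with hJdef
  have hEne : ((↑E : S)) ^ r ≠ 0 := by
    apply pow_ne_zero
    rw [Ne, Polynomial.coe_eq_zero_iff]
    exact hmonic.ne_zero
  have h1 : I ≤ J := by
    rintro y ⟨x, rfl⟩
    have hx := hheight x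
    have hmap : (↑E : S) ^ r * β x ∈
        Submodule.span S (⇑β '' Set.range ⇑φN) := by
      have := Submodule.mem_map_of_mem (f := β) hx
      rw [Submodule.map_span] at this
      rwa [map_smul, smul_eq_mul] at this
    have hle : Submodule.span S (⇑β '' Set.range ⇑φN) ≤
        Ideal.span {(c : S) * (↑E : S) ^ r} * J := by
      rw [Submodule.span_le]
      rintro z ⟨_, ⟨w, rfl⟩, rfl⟩
      rw [hcompat w]
      exact Ideal.mul_mem_mul (Ideal.mem_span_singleton_self _)
        (Ideal.subset_span ⟨β w, ⟨w, rfl⟩, rfl⟩)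
    obtain ⟨v, hv, hveq⟩ := Ideal.mem_span_singleton_mul.mp (hle hmap)
    have : β x = (c : S) * v := by
      apply mul_left_cancel₀ hEne
      rw [← hveq]; ring
    rw [this]
    exact J.mul_mem_left _ hv
  refine ⟨h1, aux_key p (Fact.out (p := p.Prime)).two_le
    (WittVector.p_nonzero p k) (aux_punit p k) (aux_pfin p k) φ hφX I hne h1⟩
end
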